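/- Let κ be a regular cardinal, fix a partition {X_ξ : ξ ∈ κ} of κ into κ-many sets of size κ, let B = {B_ξ : ξ ∈ κ} be a family of sets each meeting every X_η in at most one point and forming a Stick(κ, λ, μ)-family restricted to such sets, and set Y_ξ = X_ξ ∪ B_ξ. Then for any set T, if |{ξ ∈ κ : T ∩ Y_ξ = ∅}| < κ, then there is some ξ with |T ∩ Y_ξ| ≥ λ. -/
import Mathlib


open Set Cardinal

universe u

/-- Auxiliary: a choice function picking one point from each `X η` (for `η` in a subset)
has subsingleton intersection of its range with each `X η`, and is injective. -/
lemma stmt6_aux {α ι : Type u} {X : ι → Set α}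
    (hdisj : ∀ ξ η : ι, ξ ≠ η → X ξ ∩ X η = ∅)
    {s : Set ι} (f : ↥s → α) (hf : ∀ x : ↥s, f x ∈ X (x : ι)) :
    Function.Injective f ∧ ∀ η, #↥(Set.range f ∩ X η) ≤ 1 := by
  have key : ∀ (x : ↥s) (η : ι), f x ∈ X η → (x : ι) = η := by
    intro x η hx
    by_contra hne
    have := hdisj x η hne
    have : f x ∈ X (x : ι) ∩ X η := ⟨hf x, hx⟩
    rw [hdisj x η hne] at this
    exact this
  constructor
  · intro a b hab
    have h1 : (a : ι) = (b : ι) := key a b (hab ▸ hf b)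
    exact Subtype.ext h1
  · intro η
    rw [Cardinal.mk_le_one_iff_set_subsingleton]
    rintro a ⟨⟨x, rfl⟩, hx⟩ b ⟨⟨y, rfl⟩, hy⟩
    have hxy : (x : ι) = (y : ι) := (key x η hx).trans (key y η hy).symm
    rw [Subtype.ext hxy]

/-- the strengthened conclusion in the proof of Lemma 3.2: if `T` misses fewer
than κ-many of the sets `Y_ξ = X_ξ ∪ B_ξ`, then `|T ∩ Y_ξ| ≥ λ` for some ξ. -/
theorem stmt6 {α ι : Type u} (κ lam μ : Cardinal.{u})
    (hκ : κ.IsRegular) (hα : #α = κ) (hι : #ι = κ)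
    (X : ι → Set α)
    (hdisj : ∀ ξ η : ι, ξ ≠ η → X ξ ∩ X η = ∅)
    (hcover : ⋃ ξ, X ξ = Set.univ)
    (hXsz : ∀ ξ, #↥(X ξ) = κ)
    (B : ι → Set α) (hBinj : Function.Injective B)
    (hBsz : ∀ ξ, #↥(B ξ) = lam)
    (hBtr : ∀ ξ η, #↥(B ξ ∩ X η) ≤ 1)
    (had : ∀ ξ η, ξ ≠ η → #↥(B ξ ∩ B η) < μ)
    (habs : ∀ H : Set α, #↥H = κ → (∀ η, #↥(H ∩ X η) ≤ 1) →
      #↥{ξ : ι | B ξ ⊆ H} = κ)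
    (Y : ι → Set α) (hY : ∀ ξ, Y ξ = X ξ ∪ B ξ)
    (T : Set α) (hT : #↥{ξ : ι | T ∩ Y ξ = ∅} < κ) :
    ∃ ξ, lam ≤ #↥(T ∩ Y ξ) := by
  classical
  have hκω : ℵ₀ ≤ κ := hκ.aleph0_le
  have hιne : Nonempty ι := by
    rw [← Cardinal.mk_ne_zero_iff, hι]
    exact hκ.pos.ne'
  obtain ⟨ξ₀⟩ := hιne
  have hlamκ : lam ≤ κ := by
    rw [← hBsz ξ₀, ← hα]
    exact Cardinal.mk_set_le _
  have hmemX : ∀ a : α, ∃ η, a ∈ X η := by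
    intro a
    have : a ∈ ⋃ ξ, X ξ := by rw [hcover]; trivial
    simpa using this
  set E : Set ι := {η | (T ∩ X η).Nonempty} with hEdef
  by_cases hEbig : #↥E = κ
  · -- transversal inside T
    choose f hf using fun η : ↥E => η.2
    have hf1 : ∀ η : ↥E, f η ∈ T := fun η => (hf η).1
    have hf2 : ∀ η : ↥E, f η ∈ X (η : ι) := fun η => (hf η).2
    obtain ⟨hfinj, htr⟩ := stmt6_aux hdisj f hf2
    have hHκ : #↥(Set.range f) = κ := by
      rw [Cardinal.mk_range_eq f hfinj, hEbig]
    have hbig := habs _ hHκ htr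
    have : {ξ : ι | B ξ ⊆ Set.range f}.Nonempty := by
      rw [← Set.nonempty_coe_sort, ← Cardinal.mk_ne_zero_iff, hbig]
      exact hκ.pos.ne'
    obtain ⟨ξ, hξ⟩ := this
    refine ⟨ξ, ?_⟩
    rw [← hBsz ξ]
    apply Cardinal.mk_le_mk_of_subset
    intro b hb
    obtain ⟨η, hη⟩ := hξ hb
    exact ⟨hη ▸ hf1 η, (hY ξ).symm ▸ Or.inr hb⟩
  · have hElt : #↥E < κ := lt_of_le_of_ne (hι ▸ Cardinal.mk_set_le E) hEbig
    by_cases hbig : ∃ η, κ ≤ #↥(T ∩ X η)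
    · obtain ⟨η, hη⟩ := hbig
      refine ⟨η, hlamκ.trans (hη.trans ?_)⟩
      apply Cardinal.mk_le_mk_of_subset
      rw [hY]
      exact Set.inter_subset_inter_right _ Set.subset_union_left
    · push_neg at hbig
      -- T is small
      have hTsub : T ⊆ ⋃ η : ↥E, (T ∩ X (η : ι)) := by
        intro t ht
        obtain ⟨η, hη⟩ := hmemX t
        exact Set.mem_iUnion.2 ⟨⟨η, ⟨t, ht, hη⟩⟩, ht, hη⟩
      have hTκ : #↥T < κ := by
        calc #↥T ≤ #(⋃ η : ↥E, (T ∩ X (η : ι)) : Set α) :=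
              Cardinal.mk_le_mk_of_subset hTsub
          _ ≤ #↥E * ⨆ η : ↥E, #↥(T ∩ X (η : ι)) := Cardinal.mk_iUnion_le _
          _ < κ := Cardinal.mul_lt_of_lt hκω hElt
              (Cardinal.iSup_lt_of_isRegular hκ hElt fun η => hbig _)
      -- choose a transversal avoiding T
      have hch : ∀ η : ι, ∃ a, a ∈ X η ∧ a ∉ T := by
        intro η
        by_contra h
        push_neg at h
        have hsub : X η ⊆ T := fun a ha => h a ha
        exact absurd (hXsz η ▸ Cardinal.mk_le_mk_of_subset hsub) (not_le.2 hTκ)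
      choose g hg1 hg2 using hch
      set g' : ↥(Set.univ : Set ι) → α := fun η => g (η : ι) with hg'def
      have hg'mem : ∀ η : ↥(Set.univ : Set ι), g' η ∈ X (η : ι) := fun η => hg1 _
      obtain ⟨hginj, htr⟩ := stmt6_aux hdisj g' hg'mem
      have hHκ : #↥(Set.range g') = κ := by
        rw [Cardinal.mk_range_eq g' hginj, Cardinal.mk_univ, hι]
      have hbig2 := habs _ hHκ htr
      exfalso
      have hsub2 : {ξ : ι | B ξ ⊆ Set.range g'} ⊆ {ξ : ι | T ∩ Y ξ = ∅} ∪ E := by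
        intro ξ hξ
        by_cases hξE : ξ ∈ E
        · exact Or.inr hξE
        · refine Or.inl ?_
          rw [Set.mem_setOf_eq, hY, Set.inter_union_distrib_left]
          have h1 : T ∩ X ξ = ∅ := Set.not_nonempty_iff_eq_empty.1 hξE
          have h2 : T ∩ B ξ = ∅ := by
            rw [Set.eq_empty_iff_forall_notMem]
            rintro a ⟨haT, haB⟩
            obtain ⟨η, hη⟩ := hξ haB
            have : g (η : ι) ∈ T := by rw [show g (η : ι) = a from hη]; exact haT
            exact hg2 (η : ι) this
          rw [h1, h2, Set.empty_union]
      have : κ ≤ #↥({ξ : ι | T ∩ Y ξ = ∅} ∪ E) := by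
        rw [← hbig2]
        exact Cardinal.mk_le_mk_of_subset hsub2
      have hlt : #↥({ξ : ι | T ∩ Y ξ = ∅} ∪ E) < κ :=
        (Cardinal.mk_union_le _ _).trans_lt (Cardinal.add_lt_of_lt hκω hT hElt)
      exact absurd this (not_le.2 hlt)
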